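/- arXiv:gr-qc/9702008 — 2 statements merged into one kernel-verified Lean document; each statement's English description precedes it below -/
import Mathlib

section
/- Let n ≥ 1, let N be a Hermitian positive definite n×n complex matrix, let N¹, N², N³ be Hermitian n×n complex matrices, and let I₀ be a Hermitian positive semidefinite n×n complex matrix. Assume Condition (3): for every μ ∈ ℂ and every n̂ ∈ ℝ³ with |n̂| = 1, the only vector ψ ∈ ℂⁿ satisfying I₀ψ = 0 and (μN + i·N(n̂))ψ = 0 is ψ = 0. Then there exists δ > 0 such that for every k ∈ ℤ³ with k ≠ 0 and every λ ∈ ℂ for which there exists φ ∈ ℂⁿ, φ ≠ 0, with λNφ = (i·N(k) − I₀)φ, one has Re λ ≤ −δ. -/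
open Matrix
open scoped ComplexOrder

/-- `N(k) = k₁N¹ + k₂N² + k₃N³` for a real covector `k`. -/
noncomputable def symbolR {n : ℕ} (N1 N2 N3 : Matrix (Fin n) (Fin n) ℂ)
    (k : Fin 3 → ℝ) : Matrix (Fin n) (Fin n) ℂ :=
  (k 0 : ℂ) • N1 + (k 1 : ℂ) • N2 + (k 2 : ℂ) • N3

/-- `N(k)` for an integer covector `k`. -/
noncomputable def symbolZ {n : ℕ} (N1 N2 N3 : Matrix (Fin n) (Fin n) ℂ)
    (k : Fin 3 → ℤ) : Matrix (Fin n) (Fin n) ℂ :=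
  (k 0 : ℂ) • N1 + (k 1 : ℂ) • N2 + (k 2 : ℂ) • N3

/- ### Auxiliary lemmas -/

lemma herm_dot_im {nn : ℕ} {A : Matrix (Fin nn) (Fin nn) ℂ} (hA : A.IsHermitian) (x : Fin nn → ℂ) :
    (star x ⬝ᵥ A *ᵥ x).im = 0 := by
  have h : star (star x ⬝ᵥ A *ᵥ x) = star x ⬝ᵥ A *ᵥ x := by
    calc star (star x ⬝ᵥ A *ᵥ x) = star (A *ᵥ x) ⬝ᵥ x := by rw [star_dotProduct, star_star]
      _ = (star x ᵥ* Aᴴ) ⬝ᵥ x := by rw [star_mulVec]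
      _ = star x ⬝ᵥ Aᴴ *ᵥ x := by rw [← dotProduct_mulVec]
      _ = star x ⬝ᵥ A *ᵥ x := by rw [hA.eq]
  exact Complex.conj_eq_iff_im.mp h

lemma real_smul_herm {nn : ℕ} {A : Matrix (Fin nn) (Fin nn) ℂ} (h : A.IsHermitian) (r : ℝ) :
    ((r : ℂ) • A).IsHermitian := by
  unfold Matrix.IsHermitian at *
  rw [conjTranspose_smul, h]
  simp

lemma symbolZ_herm {nn : ℕ} {N1 N2 N3 : Matrix (Fin nn) (Fin nn) ℂ}
    (h1 : N1.IsHermitian) (h2 : N2.IsHermitian) (h3 : N3.IsHermitian) (k : Fin 3 → ℤ) :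
    (symbolZ N1 N2 N3 k).IsHermitian := by
  unfold symbolZ
  have key : ∀ (m : ℤ) (A : Matrix (Fin nn) (Fin nn) ℂ), A.IsHermitian →
      ((m : ℂ) • A).IsHermitian := fun m A h => by
    have := real_smul_herm h (m : ℝ)
    simpa using this
  exact ((key _ _ h1).add (key _ _ h2)).add (key _ _ h3)

lemma symbolR_smul_int {nn : ℕ} (N1 N2 N3 : Matrix (Fin nn) (Fin nn) ℂ) (ε : ℝ) (k : Fin 3 → ℤ) :
    symbolR N1 N2 N3 (ε • fun i => ((k i : ℝ))) = (ε : ℂ) • symbolZ N1 N2 N3 k := by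
  unfold symbolR symbolZ
  simp only [Pi.smul_apply, smul_eq_mul, Complex.ofReal_mul, smul_add, smul_smul]
  push_cast
  ring_nf

lemma dot_bound (nn : ℕ) (hn : 1 ≤ nn) (M : Matrix (Fin nn) (Fin nn) ℂ) :
    ∃ C : ℝ, 0 ≤ C ∧ ∀ φ : Fin nn → ℂ, ‖φ‖ = 1 → ‖star φ ⬝ᵥ M *ᵥ φ‖ ≤ C := by
  have hne : (Metric.sphere (0 : Fin nn → ℂ) 1).Nonempty := by
    have : Nontrivial (Fin nn → ℂ) := by
      have : Nonempty (Fin nn) := ⟨⟨0, hn⟩⟩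
      infer_instance
    exact NormedSpace.sphere_nonempty.mpr zero_le_one
  have hcomp : IsCompact (Metric.sphere (0 : Fin nn → ℂ) 1) := isCompact_sphere _ _
  have hcont : Continuous fun φ : Fin nn → ℂ => ‖star φ ⬝ᵥ M *ᵥ φ‖ :=
    continuous_norm.comp ((continuous_star.comp continuous_id).dotProduct
      (continuous_const.matrix_mulVec continuous_id))
  obtain ⟨φ₀, hφ₀, hmax⟩ := hcomp.exists_isMaxOn hne hcont.continuousOn
  exact ⟨_, norm_nonneg _, fun φ hφ => hmax (by simpa using hφ)⟩

lemma dot_coercive (nn : ℕ) (hn : 1 ≤ nn) {M : Matrix (Fin nn) (Fin nn) ℂ} (hM : M.PosDef) :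
    ∃ α : ℝ, 0 < α ∧ ∀ φ : Fin nn → ℂ, ‖φ‖ = 1 → α ≤ (star φ ⬝ᵥ M *ᵥ φ).re := by
  have hne : (Metric.sphere (0 : Fin nn → ℂ) 1).Nonempty := by
    have : Nontrivial (Fin nn → ℂ) := by
      have : Nonempty (Fin nn) := ⟨⟨0, hn⟩⟩
      infer_instance
    exact NormedSpace.sphere_nonempty.mpr zero_le_one
  have hcomp : IsCompact (Metric.sphere (0 : Fin nn → ℂ) 1) := isCompact_sphere _ _
  have hcont : Continuous fun φ : Fin nn → ℂ => (star φ ⬝ᵥ M *ᵥ φ).re :=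
    Complex.continuous_re.comp ((continuous_star.comp continuous_id).dotProduct
      (continuous_const.matrix_mulVec continuous_id))
  obtain ⟨φ₀, hφ₀, hmin⟩ := hcomp.exists_isMinOn hne hcont.continuousOn
  have hφ₀1 : ‖φ₀‖ = 1 := by simpa using hφ₀
  have hφ₀0 : φ₀ ≠ 0 := fun h => by simp [h] at hφ₀1
  have hpos : 0 < (star φ₀ ⬝ᵥ M *ᵥ φ₀).re := (Complex.lt_def.mp (hM.dotProduct_mulVec_pos hφ₀0)).1
  exact ⟨_, hpos, fun φ hφ => hmin (by simpa using hφ)⟩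

lemma eucl_coord_le_norm (x : EuclideanSpace ℝ (Fin 3)) (i : Fin 3) : |x i| ≤ ‖x‖ := by
  rw [EuclideanSpace.norm_eq]
  rw [show |x i| = Real.sqrt (‖x i‖^2) by rw [Real.sqrt_sq_eq_abs]; simp]
  apply Real.sqrt_le_sqrt
  exact Finset.single_le_sum (f := fun j => ‖x j‖^2) (fun j _ => by positivity) (Finset.mem_univ i)

set_option maxHeartbeats 1000000 in
/-- The eigenvalues of the symbol `i N(k) - I₀` (relative to the positive definite
symmetrizer `N`) have real parts uniformly bounded away from zero for all nonzero
integer frequencies `k`, provided Condition (3) holds. -/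
theorem eigenvalues_re_le_neg_delta
    (n : ℕ) (hn : 1 ≤ n)
    (N N1 N2 N3 I0 : Matrix (Fin n) (Fin n) ℂ)
    (hN : N.PosDef)
    (hN1 : N1.IsHermitian) (hN2 : N2.IsHermitian) (hN3 : N3.IsHermitian)
    (hI0 : I0.PosSemidef)
    (hcond3 : ∀ (μ : ℂ) (nh : EuclideanSpace ℝ (Fin 3)), ‖nh‖ = 1 →
      ∀ ψ : Fin n → ℂ, I0 *ᵥ ψ = 0 →
        (μ • N + Complex.I • symbolR N1 N2 N3 nh) *ᵥ ψ = 0 → ψ = 0) :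
    ∃ δ > (0 : ℝ), ∀ (k : Fin 3 → ℤ), k ≠ 0 → ∀ lam : ℂ,
      (∃ φ : Fin n → ℂ, φ ≠ 0 ∧
        lam • (N *ᵥ φ) = (Complex.I • symbolZ N1 N2 N3 k - I0) *ᵥ φ) →
      lam.re ≤ -δ := by
  obtain ⟨α, hα, hcoer⟩ := dot_coercive n hn hN
  obtain ⟨C1, hC1, hB1⟩ := dot_bound n hn N1
  obtain ⟨C2, hC2, hB2⟩ := dot_bound n hn N2
  obtain ⟨C3, hC3, hB3⟩ := dot_bound n hn N3
  obtain ⟨C0, hC0, hB0⟩ := dot_bound n hn I0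
  obtain ⟨CN, hCN, hBN⟩ := dot_bound n hn N
  by_contra hcon
  push_neg at hcon
  -- extract sequences
  have hseq : ∀ m : ℕ, ∃ (k : Fin 3 → ℤ) (lam : ℂ) (φ : Fin n → ℂ),
      k ≠ 0 ∧ ‖φ‖ = 1 ∧
      lam • (N *ᵥ φ) = (Complex.I • symbolZ N1 N2 N3 k - I0) *ᵥ φ ∧
      -((m + 1 : ℝ)⁻¹) < lam.re := by
    intro m
    obtain ⟨k, hk, lam, ⟨⟨φ, hφ0, hEq⟩, hre⟩⟩ := hcon ((m + 1 : ℝ)⁻¹) (by positivity)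
    set c : ℂ := ((‖φ‖⁻¹ : ℝ) : ℂ) with hc
    have hφn : ‖φ‖ ≠ 0 := norm_ne_zero_iff.mpr hφ0
    refine ⟨k, lam, c • φ, hk, ?_, ?_, by linarith⟩
    · rw [norm_smul, hc, Complex.norm_real, Real.norm_eq_abs, abs_inv, abs_norm,
        inv_mul_cancel₀ hφn]
    · rw [Matrix.mulVec_smul, smul_comm, hEq, Matrix.mulVec_smul]
  choose k lam φ hk hφ hEq hre using hseq
  -- basic scalar quantities
  set a : ℕ → ℂ := fun m => star (φ m) ⬝ᵥ N *ᵥ (φ m) with ha_def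
  set b : ℕ → ℂ := fun m => star (φ m) ⬝ᵥ symbolZ N1 N2 N3 (k m) *ᵥ (φ m) with hb_def
  set c : ℕ → ℂ := fun m => star (φ m) ⬝ᵥ I0 *ᵥ (φ m) with hc_def
  have hφ0 : ∀ m, φ m ≠ 0 := fun m h => by have h1 := hφ m; rw [h, norm_zero] at h1; exact one_ne_zero h1.symm
  have ha_pos : ∀ m, 0 < (a m).re := fun m => (Complex.lt_def.mp (hN.dotProduct_mulVec_pos (hφ0 m))).1
  have ha_im : ∀ m, (a m).im = 0 := fun m => herm_dot_im hN.1 _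
  have hc_nonneg : ∀ m, 0 ≤ (c m).re := fun m => (Complex.le_def.mp (hI0.dotProduct_mulVec_nonneg (φ m))).1
  have hc_im : ∀ m, (c m).im = 0 := fun m => (Complex.le_def.mp (hI0.dotProduct_mulVec_nonneg (φ m))).2.symm
  have hb_im : ∀ m, (b m).im = 0 := fun m => herm_dot_im (symbolZ_herm hN1 hN2 hN3 (k m)) _
  -- key scalar identity
  have key : ∀ m, lam m * a m = Complex.I * b m - c m := by
    intro m
    have := congrArg (fun v => star (φ m) ⬝ᵥ v) (hEq m)
    simpa [Matrix.sub_mulVec, Matrix.smul_mulVec, dotProduct_sub, dotProduct_smul,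
      smul_eq_mul, ha_def, hb_def, hc_def] using this
  have keyre : ∀ m, (lam m).re * (a m).re = -(c m).re := by
    intro m
    have := congrArg Complex.re (key m)
    simpa [Complex.mul_re, Complex.sub_re, ha_im, hb_im] using this
  have hlam_nonpos : ∀ m, (lam m).re ≤ 0 := by
    intro m
    by_contra h
    push_neg at h
    nlinarith [keyre m, ha_pos m, hc_nonneg m]
  -- the frequency covector, its norm, scalings
  set K : ℕ → EuclideanSpace ℝ (Fin 3) := fun m => WithLp.toLp 2 (fun i => ((k m i : ℝ))) with hK_def
  have hr1 : ∀ m, 1 ≤ ‖K m‖ := by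
    intro m
    obtain ⟨i, hi⟩ := Function.ne_iff.mp (hk m)
    have h1 : (1 : ℝ) ≤ |K m i| := by
      have : (1 : ℤ) ≤ |k m i| := Int.one_le_abs (by simpa using hi)
      calc (1:ℝ) ≤ |(k m i : ℝ)| := by exact_mod_cast this
        _ = |K m i| := rfl
    exact h1.trans (eucl_coord_le_norm _ i)
  set r : ℕ → ℝ := fun m => ‖K m‖ with hr_def
  have hr_pos : ∀ m, 0 < r m := fun m => lt_of_lt_of_le one_pos (hr1 m)
  set ε : ℕ → ℝ := fun m => (r m)⁻¹ with hε_def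
  have hε_pos : ∀ m, 0 < ε m := fun m => inv_pos.mpr (hr_pos m)
  have hε_le1 : ∀ m, ε m ≤ 1 := fun m => inv_le_one_of_one_le₀ (hr1 m)
  set nh : ℕ → EuclideanSpace ℝ (Fin 3) := fun m => ε m • K m with hnh_def
  have hnh1 : ∀ m, ‖nh m‖ = 1 := by
    intro m
    rw [hnh_def]
    simp only [norm_smul, Real.norm_eq_abs, abs_of_pos (hε_pos m)]
    exact inv_mul_cancel₀ (ne_of_gt (hr_pos m))
  set μ : ℕ → ℂ := fun m => ((ε m : ℝ) : ℂ) * lam m with hμ_def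
  -- bound on |μ|
  have hb_bound : ∀ m, ‖b m‖ ≤ r m * (C1 + C2 + C3) := by
    intro m
    have hexp : b m = (k m 0 : ℂ) * (star (φ m) ⬝ᵥ N1 *ᵥ (φ m))
        + (k m 1 : ℂ) * (star (φ m) ⬝ᵥ N2 *ᵥ (φ m))
        + (k m 2 : ℂ) * (star (φ m) ⬝ᵥ N3 *ᵥ (φ m)) := by
      rw [hb_def]
      simp [symbolZ, Matrix.add_mulVec, Matrix.smul_mulVec, dotProduct_add,
        dotProduct_smul, smul_eq_mul]
    have hki : ∀ i, ‖(k m i : ℂ)‖ ≤ r m := by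
      intro i
      have : ‖(k m i : ℂ)‖ = |(k m i : ℝ)| := by
        rw [show ((k m i : ℂ)) = (((k m i : ℝ) : ℝ) : ℂ) by push_cast; ring]
        exact Complex.norm_real _
      rw [this]
      exact eucl_coord_le_norm (K m) i
    rw [hexp]
    calc ‖_‖ ≤ ‖(k m 0 : ℂ) * (star (φ m) ⬝ᵥ N1 *ᵥ (φ m))
          + (k m 1 : ℂ) * (star (φ m) ⬝ᵥ N2 *ᵥ (φ m))‖
          + ‖(k m 2 : ℂ) * (star (φ m) ⬝ᵥ N3 *ᵥ (φ m))‖ := norm_add_le _ _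
      _ ≤ ‖(k m 0 : ℂ) * (star (φ m) ⬝ᵥ N1 *ᵥ (φ m))‖
          + ‖(k m 1 : ℂ) * (star (φ m) ⬝ᵥ N2 *ᵥ (φ m))‖
          + ‖(k m 2 : ℂ) * (star (φ m) ⬝ᵥ N3 *ᵥ (φ m))‖ := by
            have := norm_add_le ((k m 0 : ℂ) * (star (φ m) ⬝ᵥ N1 *ᵥ (φ m)))
              ((k m 1 : ℂ) * (star (φ m) ⬝ᵥ N2 *ᵥ (φ m)))
            linarith
      _ ≤ r m * C1 + r m * C2 + r m * C3 := by
          gcongr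
          · rw [norm_mul]
            exact mul_le_mul (hki 0) (hB1 _ (hφ m)) (norm_nonneg _)
              (le_of_lt (hr_pos m))
          · rw [norm_mul]
            exact mul_le_mul (hki 1) (hB2 _ (hφ m)) (norm_nonneg _)
              (le_of_lt (hr_pos m))
          · rw [norm_mul]
            exact mul_le_mul (hki 2) (hB3 _ (hφ m)) (norm_nonneg _)
              (le_of_lt (hr_pos m))
      _ = r m * (C1 + C2 + C3) := by ring
  set Cb : ℝ := (C1 + C2 + C3 + C0) / α with hCb_def
  have hμ_bound : ∀ m, ‖μ m‖ ≤ Cb := by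
    intro m
    have h3 : α ≤ ‖a m‖ :=
      le_trans (hcoer _ (hφ m)) ((le_abs_self _).trans (Complex.abs_re_le_norm _))
    have h2 : ‖Complex.I * b m - c m‖ ≤ ‖b m‖ + ‖c m‖ := by
      calc ‖Complex.I * b m - c m‖ = ‖Complex.I * b m - c m‖ := rfl
        _ ≤ ‖Complex.I * b m‖ + ‖c m‖ := norm_sub_le _ _
        _ = ‖b m‖ + ‖c m‖ := by
            rw [norm_mul]
            simp
    have hlam_b : ‖lam m‖ * α ≤ r m * (C1 + C2 + C3 + C0) := by
      calc ‖lam m‖ * α ≤ ‖lam m‖ * ‖a m‖ :=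
            mul_le_mul_of_nonneg_left h3 (norm_nonneg _)
        _ = ‖Complex.I * b m - c m‖ := by rw [← norm_mul, key m]
        _ ≤ ‖b m‖ + ‖c m‖ := h2
        _ ≤ r m * (C1 + C2 + C3) + C0 := add_le_add (hb_bound m) (hB0 _ (hφ m))
        _ ≤ r m * (C1 + C2 + C3 + C0) := by nlinarith [hr1 m, hC0]
    have h4 : ‖lam m‖ ≤ r m * (C1 + C2 + C3 + C0) / α := by
      rw [le_div_iff₀ hα]; exact hlam_b
    have hμabs : ‖μ m‖ = ε m * ‖lam m‖ := by
      rw [hμ_def]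
      simp [norm_mul, Complex.norm_real, abs_of_pos (hε_pos m)]
    have hεr : ε m * r m = 1 := inv_mul_cancel₀ (ne_of_gt (hr_pos m))
    calc ‖μ m‖ = ε m * ‖lam m‖ := hμabs
      _ ≤ ε m * (r m * (C1 + C2 + C3 + C0) / α) :=
          mul_le_mul_of_nonneg_left h4 (le_of_lt (hε_pos m))
      _ = (ε m * r m) * (C1 + C2 + C3 + C0) / α := by ring
      _ = Cb := by rw [hεr, hCb_def]; ring
  -- the compactness argument
  set x : ℕ → ℂ × EuclideanSpace ℝ (Fin 3) × ℝ × (Fin n → ℂ) :=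
    fun m => (μ m, nh m, ε m, φ m) with hx_def
  set s : Set (ℂ × EuclideanSpace ℝ (Fin 3) × ℝ × (Fin n → ℂ)) :=
    Metric.closedBall (0 : ℂ) Cb ×ˢ
      (Metric.sphere (0 : EuclideanSpace ℝ (Fin 3)) 1 ×ˢ
        (Set.Icc (0 : ℝ) 1 ×ˢ Metric.sphere (0 : Fin n → ℂ) 1)) with hs_def
  have hs_comp : IsCompact s :=
    (isCompact_closedBall _ _).prod ((isCompact_sphere _ _).prod
      (isCompact_Icc.prod (isCompact_sphere _ _)))
  have hxmem : ∀ m, x m ∈ s := by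
    intro m
    refine ⟨?_, ?_, ⟨le_of_lt (hε_pos m), hε_le1 m⟩, ?_⟩
    · simpa [Metric.mem_closedBall, dist_zero_right] using hμ_bound m
    · simpa [mem_sphere_zero_iff_norm] using hnh1 m
    · simpa [mem_sphere_zero_iff_norm] using hφ m
  obtain ⟨p0, hp0s, σ, hσmono, hσlim⟩ := hs_comp.tendsto_subseq hxmem
  set μ0 : ℂ := p0.1 with hμ0_def
  set nh0 : EuclideanSpace ℝ (Fin 3) := p0.2.1 with hnh0_def
  set ε0 : ℝ := p0.2.2.1 with hε0_def
  set φ0 : Fin n → ℂ := p0.2.2.2 with hφ0_def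
  have hnh0norm : ‖nh0‖ = 1 := by
    have := hp0s.2.1
    simpa [mem_sphere_zero_iff_norm] using this
  have hφ0norm : ‖φ0‖ = 1 := by
    have := hp0s.2.2.2
    simpa [mem_sphere_zero_iff_norm] using this
  -- continuity facts
  have h4c : Continuous fun p : ℂ × EuclideanSpace ℝ (Fin 3) × ℝ × (Fin n → ℂ) => p.2.2.2 :=
    continuous_snd.comp (continuous_snd.comp continuous_snd)
  have h3c : Continuous fun p : ℂ × EuclideanSpace ℝ (Fin 3) × ℝ × (Fin n → ℂ) => p.2.2.1 :=
    continuous_fst.comp (continuous_snd.comp continuous_snd)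
  have h2c : Continuous fun p : ℂ × EuclideanSpace ℝ (Fin 3) × ℝ × (Fin n → ℂ) => p.2.1 :=
    continuous_fst.comp continuous_snd
  have hcoordc : ∀ i : Fin 3,
      Continuous fun p : ℂ × EuclideanSpace ℝ (Fin 3) × ℝ × (Fin n → ℂ) => ((p.2.1 i : ℝ) : ℂ) :=
    fun i => Complex.continuous_ofReal.comp ((EuclideanSpace.proj i).continuous.comp h2c)
  have hSymc : Continuous fun p : ℂ × EuclideanSpace ℝ (Fin 3) × ℝ × (Fin n → ℂ) =>
      symbolR N1 N2 N3 p.2.1 := by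
    unfold symbolR
    exact (((hcoordc 0).smul continuous_const).add
      ((hcoordc 1).smul continuous_const)).add ((hcoordc 2).smul continuous_const)
  set G : ℂ × EuclideanSpace ℝ (Fin 3) × ℝ × (Fin n → ℂ) → (Fin n → ℂ) :=
    fun p => p.1 • (N *ᵥ p.2.2.2) + ((p.2.2.1 : ℝ) : ℂ) • (I0 *ᵥ p.2.2.2)
      - Complex.I • (symbolR N1 N2 N3 p.2.1 *ᵥ p.2.2.2) with hG_def
  have hGcont : Continuous G := by
    rw [hG_def]
    exact ((continuous_fst.smul (continuous_const.matrix_mulVec h4c)).add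
      ((Complex.continuous_ofReal.comp h3c).smul (continuous_const.matrix_mulVec h4c))).sub
      ((hSymc.matrix_mulVec h4c).const_smul Complex.I)
  have hGzero : ∀ m, G (x m) = 0 := by
    intro m
    have hsymb : symbolR N1 N2 N3 (nh m) = (ε m : ℂ) • symbolZ N1 N2 N3 (k m) :=
      symbolR_smul_int N1 N2 N3 (ε m) (k m)
    have e1 : (μ m) • (N *ᵥ φ m) = (ε m : ℂ) • (lam m • (N *ᵥ φ m)) := by
      rw [hμ_def, smul_smul]
    show (μ m) • (N *ᵥ φ m) + ((ε m : ℝ) : ℂ) • (I0 *ᵥ φ m)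
        - Complex.I • (symbolR N1 N2 N3 (nh m) *ᵥ φ m) = 0
    rw [e1, hEq m, hsymb]
    simp only [Matrix.sub_mulVec, Matrix.smul_mulVec, smul_sub, smul_smul]
    module
  have hG0 : G p0 = 0 := by
    have hlim1 : Filter.Tendsto (fun m => G (x (σ m))) Filter.atTop (nhds (G p0)) :=
      (hGcont.tendsto p0).comp hσlim
    have hlim2 : Filter.Tendsto (fun m => G (x (σ m))) Filter.atTop (nhds 0) := by
      have : (fun m => G (x (σ m))) = fun _ => (0 : Fin n → ℂ) := funext fun m => hGzero (σ m)
      rw [this]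
      exact tendsto_const_nhds
    exact tendsto_nhds_unique hlim1 hlim2
  -- limit of the dissipation quadratic form
  have hφlim : Filter.Tendsto (fun m => φ (σ m)) Filter.atTop (nhds φ0) :=
    (h4c.tendsto p0).comp hσlim
  have hfcont : Continuous fun ψ : Fin n → ℂ => (star ψ ⬝ᵥ I0 *ᵥ ψ).re :=
    Complex.continuous_re.comp ((continuous_star.comp continuous_id).dotProduct
      (continuous_const.matrix_mulVec continuous_id))
  have hcub : ∀ m, (c m).re ≤ (m + 1 : ℝ)⁻¹ * CN := by
    intro m
    have h1 := keyre m
    have h2 := hre m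
    have h3 : (a m).re ≤ CN :=
      le_trans ((le_abs_self _).trans (Complex.abs_re_le_norm _)) (hBN _ (hφ m))
    have h4 := ha_pos m
    have h5 := hlam_nonpos m
    have h6 : (0:ℝ) < (m + 1 : ℝ)⁻¹ := by positivity
    nlinarith
  have hclim1 : Filter.Tendsto (fun m => (c (σ m)).re) Filter.atTop
      (nhds ((star φ0 ⬝ᵥ I0 *ᵥ φ0).re)) := by
    have := (hfcont.tendsto φ0).comp hφlim
    exact this
  have hclim2 : Filter.Tendsto (fun m => (c (σ m)).re) Filter.atTop (nhds 0) := by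
    have hb : Filter.Tendsto (fun m : ℕ => (m + 1 : ℝ)⁻¹ * CN) Filter.atTop (nhds 0) := by
      have h := tendsto_one_div_add_atTop_nhds_zero_nat.mul_const CN
      simpa [one_div] using h
    refine tendsto_of_tendsto_of_tendsto_of_le_of_le tendsto_const_nhds hb
      (fun m => hc_nonneg (σ m)) (fun m => ?_)
    refine le_trans (hcub (σ m)) ?_
    have hmle : (m : ℝ) + 1 ≤ (σ m : ℝ) + 1 := by
      have h : m ≤ σ m := hσmono.le_apply
      have h2 : (m : ℝ) ≤ (σ m : ℝ) := by exact_mod_cast h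
      linarith
    have hinv : ((σ m : ℝ) + 1)⁻¹ ≤ ((m : ℝ) + 1)⁻¹ := by
      apply inv_anti₀ (by positivity) hmle
    exact mul_le_mul_of_nonneg_right hinv hCN
  have hcre0 : (star φ0 ⬝ᵥ I0 *ᵥ φ0).re = 0 := tendsto_nhds_unique hclim1 hclim2
  have hc0 : star φ0 ⬝ᵥ I0 *ᵥ φ0 = 0 := by
    have him : (star φ0 ⬝ᵥ I0 *ᵥ φ0).im = 0 := (Complex.le_def.mp (hI0.dotProduct_mulVec_nonneg φ0)).2.symm
    exact Complex.ext (by simpa using hcre0) (by simpa using him)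
  have hI0φ0 : I0 *ᵥ φ0 = 0 := (hI0.dotProduct_mulVec_zero_iff φ0).mp hc0
  -- final contradiction via Condition (3)
  have hG0' : μ0 • (N *ᵥ φ0) - Complex.I • (symbolR N1 N2 N3 nh0 *ᵥ φ0) = 0 := by
    have := hG0
    have h' : G p0 = μ0 • (N *ᵥ φ0) + ((ε0 : ℝ) : ℂ) • (I0 *ᵥ φ0)
        - Complex.I • (symbolR N1 N2 N3 nh0 *ᵥ φ0) := rfl
    rw [h', hI0φ0, smul_zero, add_zero] at this
    exact this
  have heq2 : ((-μ0) • N + Complex.I • symbolR N1 N2 N3 nh0) *ᵥ φ0 = 0 := by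
    rw [Matrix.add_mulVec, Matrix.smul_mulVec, Matrix.smul_mulVec]
    have : μ0 • (N *ᵥ φ0) = Complex.I • (symbolR N1 N2 N3 nh0 *ᵥ φ0) := by
      have := hG0'
      linear_combination (norm := module) this
    rw [neg_smul, this]
    module
  have : φ0 = 0 := hcond3 (-μ0) nh0 hnh0norm φ0 hI0φ0 heq2
  rw [this] at hφ0norm
  simp at hφ0norm
end

section
/- Let n ≥ 1, let N be a Hermitian positive definite n×n complex matrix, let N¹, N², N³ be Hermitian n×n complex matrices, and let I₀ be a Hermitian positive semidefinite n×n complex matrix. Assume Condition (3): for every μ ∈ ℂ and every n̂ ∈ ℝ³ with |n̂| = 1, the only vector ψ ∈ ℂⁿ satisfying I₀ψ = 0 and (μN + i·N(n̂))ψ = 0 is ψ = 0. Then there exists c' > 0 with the following property: for every k ∈ ℝ³ with |k| ≥ 1, every λ ∈ ℂ and every φ ∈ ℂⁿ with φ ≠ 0 satisfying λNφ = (i·N(k) − I₀)φ, if φ = ψ + η is the decomposition of φ with ψ the orthogonal projection of φ onto the kernel of I₀ and η in the orthogonal complement of the kernel of I₀, then ⟨ψ, Nψ⟩ ≤ c'·⟨η,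 Nη⟩. -/
open Matrix
open scoped ComplexOrder

namespace IEVPaux

noncomputable def mvL {n : ℕ} (M : Matrix (Fin n) (Fin n) ℂ) :
    EuclideanSpace ℂ (Fin n) →L[ℂ] EuclideanSpace ℂ (Fin n) :=
  LinearMap.toContinuousLinearMap (Matrix.toEuclideanLin M)

lemma mvL_apply {n : ℕ} (M : Matrix (Fin n) (Fin n) ℂ) (v : EuclideanSpace ℂ (Fin n)) :
    mvL M v = M *ᵥ v := rfl

lemma mvL_add {n : ℕ} (A B : Matrix (Fin n) (Fin n) ℂ) : mvL (A + B) = mvL A + mvL B := by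
  ext v
  simp [mvL, map_add]

lemma mvL_smul {n : ℕ} (c : ℂ) (A : Matrix (Fin n) (Fin n) ℂ) : mvL (c • A) = c • mvL A := by
  ext v
  simp [mvL, _root_.map_smul]

lemma mvL_sub {n : ℕ} (A B : Matrix (Fin n) (Fin n) ℂ) : mvL (A - B) = mvL A - mvL B := by
  rw [sub_eq_add_neg, ← neg_one_smul ℂ B, mvL_add, mvL_smul]
  module

lemma inner_eq {n : ℕ} (x y : EuclideanSpace ℂ (Fin n)) :
    (inner ℂ x y : ℂ) = star x ⬝ᵥ y := by
  rw [EuclideanSpace.inner_eq_star_dotProduct, dotProduct_comm]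

lemma mvL_symbolR {n : ℕ} (N1 N2 N3 : Matrix (Fin n) (Fin n) ℂ) (k : Fin 3 → ℝ) :
    mvL (symbolR N1 N2 N3 k)
      = ((k 0 : ℂ)) • mvL N1 + ((k 1 : ℂ)) • mvL N2 + ((k 2 : ℂ)) • mvL N3 := by
  rw [symbolR, mvL_add, mvL_add, mvL_smul, mvL_smul, mvL_smul]


lemma coord_le {ι : Type*} [Fintype ι] (x : EuclideanSpace ℝ ι) (i : ι) : |x i| ≤ ‖x‖ := by
  rw [EuclideanSpace.norm_eq]
  have h1 : |x i| = Real.sqrt (‖x i‖ ^ 2) := by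
    rw [Real.sqrt_sq_eq_abs, Real.norm_eq_abs, abs_abs]
  rw [h1]
  apply Real.sqrt_le_sqrt
  exact Finset.single_le_sum (f := fun j => ‖x j‖ ^ 2) (fun j _ => by positivity) (Finset.mem_univ i)

lemma quad_pos_lower {n : ℕ} (hn : 1 ≤ n) {N : Matrix (Fin n) (Fin n) ℂ} (hN : N.PosDef) :
    ∃ a > (0:ℝ), ∀ v : EuclideanSpace ℂ (Fin n), a * ‖v‖ ^ 2 ≤ (star v ⬝ᵥ (N *ᵥ v)).re := by
  haveI : NeZero n := ⟨by omega⟩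
  set f : EuclideanSpace ℂ (Fin n) → ℝ := fun v => (star v ⬝ᵥ (N *ᵥ v)).re with hf
  have hfc : Continuous f := by
    have : Continuous fun v : EuclideanSpace ℂ (Fin n) => (inner ℂ v (mvL N v) : ℂ).re :=
      Complex.continuous_re.comp (continuous_id.inner (mvL N).continuous)
    exact this.congr (fun v => by rw [inner_eq]; rfl)
  have hsne : (Metric.sphere (0 : EuclideanSpace ℂ (Fin n)) 1).Nonempty :=
    NormedSpace.sphere_nonempty.mpr zero_le_one
  obtain ⟨v0, hv0s, hmin⟩ := (isCompact_sphere (0 : EuclideanSpace ℂ (Fin n)) 1).exists_isMinOn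
    hsne hfc.continuousOn
  have hv0n : ‖v0‖ = 1 := mem_sphere_zero_iff_norm.mp hv0s
  have hv0 : v0 ≠ 0 := by
    intro h; rw [h] at hv0n; simp at hv0n
  have ha : 0 < f v0 := hN.re_dotProduct_pos (by simpa using hv0)
  refine ⟨f v0, ha, fun v => ?_⟩
  rcases eq_or_ne v 0 with rfl | hv
  · simp [hf]
  · have hvn : 0 < ‖v‖ := norm_pos_iff.mpr hv
    set c : ℂ := ((‖v‖⁻¹ : ℝ) : ℂ) with hc
    have hmem : c • v ∈ Metric.sphere (0 : EuclideanSpace ℂ (Fin n)) 1 := by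
      rw [mem_sphere_zero_iff_norm, norm_smul, hc]
      simp [abs_of_pos (inv_pos.mpr hvn), inv_mul_cancel₀ (ne_of_gt hvn)]
    have hle := isMinOn_iff.mp hmin _ hmem
    have hscale : f (c • v) = (‖v‖⁻¹ * ‖v‖⁻¹) * f v := by
      have hfi : ∀ w, f w = (inner ℂ w (mvL N w)).re := fun w => by rw [inner_eq]; rfl
      rw [hfi, hfi]
      rw [_root_.map_smul, inner_smul_left, inner_smul_right, hc, Complex.conj_ofReal, ← mul_assoc,
        ← Complex.ofReal_mul, Complex.re_ofReal_mul]
    rw [hscale] at hle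
    rw [show ‖v‖⁻¹ * ‖v‖⁻¹ = ‖v‖⁻¹ ^ 2 by ring] at hle
    have h2 : f v0 * ‖v‖ ^ 2 ≤ f v := by
      have := mul_le_mul_of_nonneg_right hle (le_of_lt (pow_pos hvn 2))
      calc f v0 * ‖v‖ ^ 2 ≤ ‖v‖⁻¹ ^ 2 * f v * ‖v‖ ^ 2 := this
        _ = f v := by field_simp
    linarith


set_option maxHeartbeats 1000000 in
lemma key {n : ℕ} (N N1 N2 N3 I0 : Matrix (Fin n) (Fin n) ℂ)
    (hcond3 : ∀ (μ : ℂ) (nh : EuclideanSpace ℝ (Fin 3)), ‖nh‖ = 1 →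
      ∀ ψ : Fin n → ℂ, I0 *ᵥ ψ = 0 →
        (μ • N + Complex.I • symbolR N1 N2 N3 nh) *ᵥ ψ = 0 → ψ = 0) (R : ℝ) :
    ∃ δ > (0:ℝ), ∀ (μ : ℂ), ‖μ‖ ≤ R → ∀ (nh : EuclideanSpace ℝ (Fin 3)), ‖nh‖ = 1 →
      ∀ ψ : EuclideanSpace ℂ (Fin n), I0 *ᵥ ψ = 0 →
        δ * ‖ψ‖ ≤ ‖mvL (μ • N + Complex.I • symbolR N1 N2 N3 nh) ψ‖ := by
  classical
  let E := EuclideanSpace ℂ (Fin n)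
  let E3 := EuclideanSpace ℝ (Fin 3)
  set K : Set E := (fun ψ => mvL I0 ψ) ⁻¹' {0} ∩ Metric.sphere (0 : E) 1 with hK
  -- membership helper
  have hKmem : ∀ ψ : E, ψ ∈ K ↔ (mvL I0 ψ = 0 ∧ ‖ψ‖ = 1) := by
    intro ψ
    simp [hK, Set.mem_preimage, mem_sphere_zero_iff_norm]
  by_cases hne : K.Nonempty
  · -- compactness argument
    set g : ℂ × E3 × E → ℝ :=
      fun p => ‖mvL (p.1 • N + Complex.I • symbolR N1 N2 N3 p.2.1) p.2.2‖ with hg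
    have hexp : ∀ (μ : ℂ) (w : EuclideanSpace ℝ (Fin 3)) (v : EuclideanSpace ℂ (Fin n)),
        mvL (μ • N + Complex.I • symbolR N1 N2 N3 w) v
          = μ • mvL N v + Complex.I •
            (((w 0 : ℝ) : ℂ) • mvL N1 v + ((w 1 : ℝ) : ℂ) • mvL N2 v
              + ((w 2 : ℝ) : ℂ) • mvL N3 v) := by
      intro μ w v
      rw [mvL_add, mvL_smul, mvL_smul, mvL_symbolR]
      simp only [ContinuousLinearMap.add_apply, ContinuousLinearMap.smul_apply]
    have hgeq : g = fun p : ℂ × E3 × E =>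
        ‖p.1 • mvL N p.2.2 + Complex.I •
          (((p.2.1 0 : ℝ) : ℂ) • mvL N1 p.2.2 + ((p.2.1 1 : ℝ) : ℂ) • mvL N2 p.2.2
            + ((p.2.1 2 : ℝ) : ℂ) • mvL N3 p.2.2)‖ := by
      funext p
      exact congrArg (fun v => ‖v‖) (hexp p.1 p.2.1 p.2.2)
    have hproj : ∀ i : Fin 3, Continuous fun p : ℂ × E3 × E => ((p.2.1 i : ℝ) : ℂ) :=
      fun i => Complex.continuous_ofReal.comp
        ((EuclideanSpace.proj i).continuous.comp (continuous_fst.comp continuous_snd))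
    have hgc : Continuous g := by
      rw [hgeq]
      have hψ : Continuous fun p : ℂ × E3 × E => p.2.2 := continuous_snd.comp continuous_snd
      simp only [E3, E] at *
      fun_prop
    have hKc : IsCompact K :=
      (isCompact_sphere (0 : E) 1).inter_left
        (isClosed_singleton.preimage (mvL I0).continuous)
    have hS3ne : (Metric.sphere (0 : E3) 1).Nonempty :=
      ⟨EuclideanSpace.single (0 : Fin 3) (1 : ℝ), by
        rw [mem_sphere_zero_iff_norm, EuclideanSpace.norm_single]; simp⟩
    set T : Set (ℂ × E3 × E) :=
      Metric.closedBall (0 : ℂ) (max R 0) ×ˢ (Metric.sphere (0 : E3) 1 ×ˢ K) with hT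
    have hTc : IsCompact T :=
      (isCompact_closedBall _ _).prod ((isCompact_sphere _ _).prod hKc)
    have hTne : T.Nonempty := by
      obtain ⟨ψ1, hψ1⟩ := hne
      obtain ⟨w, hw⟩ := hS3ne
      exact ⟨(0, w, ψ1), by
        simp only [hT, Set.mem_prod]
        exact ⟨by simp [Metric.mem_closedBall], hw, hψ1⟩⟩
    obtain ⟨p0, hp0T, hp0min⟩ := hTc.exists_isMinOn hTne hgc.continuousOn
    have hp0T' := hp0T
    rw [hT, Set.mem_prod] at hp0T'
    obtain ⟨hμ0, hp2⟩ := hp0T'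
    rw [Set.mem_prod] at hp2
    obtain ⟨hnh0, hψ0K⟩ := hp2
    rw [hKmem] at hψ0K
    have hψ0n : ‖p0.2.2‖ = 1 := hψ0K.2
    have hδpos : 0 < g p0 := by
      rcases lt_or_eq_of_le (norm_nonneg
        (mvL (p0.1 • N + Complex.I • symbolR N1 N2 N3 p0.2.1) p0.2.2)) with h | h
      · exact h
      · exfalso
        have hz : mvL (p0.1 • N + Complex.I • symbolR N1 N2 N3 p0.2.1) p0.2.2 = 0 :=
          norm_eq_zero.mp h.symm
        have h0 : p0.2.2 = 0 := by
          exact WithLp.ofLp_injective 2 (hcond3 p0.1 p0.2.1 (mem_sphere_zero_iff_norm.mp hnh0) p0.2.2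
            (congrArg WithLp.ofLp hψ0K.1) (congrArg WithLp.ofLp hz))
        rw [h0] at hψ0n
        simp at hψ0n
    refine ⟨g p0, hδpos, fun μ hμ nh hnh ψ hψker => ?_⟩
    rcases eq_or_ne ψ 0 with rfl | hψ0
    · simp
    · have hvn : 0 < ‖ψ‖ := norm_pos_iff.mpr hψ0
      set c : ℂ := ((‖ψ‖⁻¹ : ℝ) : ℂ) with hc
      have hcn : ‖c‖ = ‖ψ‖⁻¹ := by
        rw [hc, Complex.norm_real, Real.norm_eq_abs, abs_of_pos (inv_pos.mpr hvn)]
      have hmemK : c • ψ ∈ K := by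
        rw [hKmem]
        constructor
        · have : mvL I0 ψ = 0 := congrArg (WithLp.toLp 2) hψker
          rw [_root_.map_smul, this, smul_zero]
        · rw [norm_smul, hcn, inv_mul_cancel₀ (ne_of_gt hvn)]
      have hmemT : (μ, nh, c • ψ) ∈ T := by
        simp only [hT, Set.mem_prod]
        exact ⟨by rw [Metric.mem_closedBall, dist_zero_right]; exact le_max_of_le_left hμ,
          mem_sphere_zero_iff_norm.mpr hnh, hmemK⟩
      have hle := isMinOn_iff.mp hp0min _ hmemT
      have hscale : g (μ, nh, c • ψ)
          = ‖ψ‖⁻¹ * ‖mvL (μ • N + Complex.I • symbolR N1 N2 N3 nh) ψ‖ := by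
        rw [hg]
        simp only
        rw [_root_.map_smul, norm_smul, hcn]
      rw [hscale] at hle
      rw [mul_comm (g p0) ‖ψ‖, ← le_div_iff₀' hvn, div_eq_inv_mul]
      exact hle
  · -- kernel is trivial
    refine ⟨1, one_pos, fun μ hμ nh hnh ψ hψker => ?_⟩
    have hψ0 : ψ = 0 := by
      by_contra h
      have hvn : 0 < ‖ψ‖ := norm_pos_iff.mpr h
      set c : ℂ := ((‖ψ‖⁻¹ : ℝ) : ℂ) with hc
      refine hne ⟨c • ψ, ?_⟩
      rw [hKmem]
      constructor
      · have : mvL I0 ψ = 0 := congrArg (WithLp.toLp 2) hψker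
        rw [_root_.map_smul, this, smul_zero]
      · rw [norm_smul, hc, Complex.norm_real, Real.norm_eq_abs,
          abs_of_pos (inv_pos.mpr hvn), inv_mul_cancel₀ (ne_of_gt hvn)]
    rw [hψ0]
    simp


lemma re_le_norm (z : ℂ) : z.re ≤ ‖z‖ := by
  exact Complex.re_le_norm z

lemma symbol_bound {n : ℕ} (N1 N2 N3 : Matrix (Fin n) (Fin n) ℂ)
    (w : EuclideanSpace ℝ (Fin 3)) (v : EuclideanSpace ℂ (Fin n)) :
    ‖mvL (symbolR N1 N2 N3 w) v‖
      ≤ (‖mvL N1‖ + ‖mvL N2‖ + ‖mvL N3‖) * ‖w‖ * ‖v‖ := by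
  rw [mvL_symbolR]
  simp only [ContinuousLinearMap.add_apply, ContinuousLinearMap.smul_apply]
  have h : ∀ (A : Matrix (Fin n) (Fin n) ℂ) (i : Fin 3),
      ‖((w i : ℝ) : ℂ) • mvL A v‖ ≤ ‖mvL A‖ * ‖w‖ * ‖v‖ := by
    intro A i
    rw [norm_smul, Complex.norm_real, Real.norm_eq_abs]
    have h1 : |w i| ≤ ‖w‖ := coord_le w i
    have h2 : ‖mvL A v‖ ≤ ‖mvL A‖ * ‖v‖ := (mvL A).le_opNorm v
    nlinarith [abs_nonneg (w i), norm_nonneg (mvL A v), norm_nonneg w,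
      norm_nonneg (mvL A), norm_nonneg v]
  refine le_trans (norm_add_le _ _) ?_
  refine le_trans (add_le_add_left (norm_add_le _ _) _) ?_
  have e : (‖mvL N1‖ + ‖mvL N2‖ + ‖mvL N3‖) * ‖w‖ * ‖v‖
      = ‖mvL N1‖ * ‖w‖ * ‖v‖ + ‖mvL N2‖ * ‖w‖ * ‖v‖ + ‖mvL N3‖ * ‖w‖ * ‖v‖ := by ring
  rw [e]
  exact add_le_add (add_le_add (h N1 0) (h N2 1)) (h N3 2)

set_option maxHeartbeats 1000000 in
lemma main_aux (n : ℕ) (hn : 1 ≤ n)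
    (N N1 N2 N3 I0 : Matrix (Fin n) (Fin n) ℂ)
    (hN : N.PosDef)
    (hcond3 : ∀ (μ : ℂ) (nh : EuclideanSpace ℝ (Fin 3)), ‖nh‖ = 1 →
      ∀ ψ : Fin n → ℂ, I0 *ᵥ ψ = 0 →
        (μ • N + Complex.I • symbolR N1 N2 N3 nh) *ᵥ ψ = 0 → ψ = 0) :
    ∃ c' > (0 : ℝ), ∀ (k : EuclideanSpace ℝ (Fin 3)), 1 ≤ ‖k‖ →
      ∀ (lam : ℂ) (φ ψ η : EuclideanSpace ℂ (Fin n)), φ ≠ 0 →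
      lam • (N *ᵥ φ) = (Complex.I • symbolR N1 N2 N3 k - I0) *ᵥ φ →
      φ = ψ + η →
      I0 *ᵥ ψ = 0 →
      (star ψ ⬝ᵥ (N *ᵥ ψ)).re ≤ c' * (star η ⬝ᵥ (N *ᵥ η)).re := by
  obtain ⟨a, ha, hlow⟩ := quad_pos_lower hn hN
  obtain ⟨nN, hnN0, hnNle⟩ : ∃ s, 0 ≤ s ∧
      ∀ v : EuclideanSpace ℂ (Fin n), ‖mvL N v‖ ≤ s * ‖v‖ :=
    ⟨‖mvL N‖, norm_nonneg _, fun v => (mvL N).le_opNorm v⟩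
  obtain ⟨cI, hcI0, hcIle⟩ : ∃ s, 0 ≤ s ∧
      ∀ v : EuclideanSpace ℂ (Fin n), ‖mvL I0 v‖ ≤ s * ‖v‖ :=
    ⟨‖mvL I0‖, norm_nonneg _, fun v => (mvL I0).le_opNorm v⟩
  obtain ⟨B, hB0, hBle⟩ : ∃ s, 0 ≤ s ∧
      ∀ (w : EuclideanSpace ℝ (Fin 3)) (v : EuclideanSpace ℂ (Fin n)),
        ‖mvL (symbolR N1 N2 N3 w) v‖ ≤ s * ‖w‖ * ‖v‖ :=
    ⟨‖mvL N1‖ + ‖mvL N2‖ + ‖mvL N3‖, by positivity, fun w v => symbol_bound N1 N2 N3 w v⟩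
  set R := (B + cI) / a with hRd
  clear_value R
  have hR0 : 0 ≤ R := by rw [hRd]; positivity
  obtain ⟨δ, hδ, hkey⟩ := key N N1 N2 N3 I0 hcond3 R
  set C := cI + R * nN + B + 1 with hCd
  clear_value C
  have hC0 : 0 < C := by rw [hCd]; positivity
  refine ⟨(nN + 1) * (C / δ)^2 / a, by positivity, ?_⟩
  intro k hk lam φ ψ η hφ0 heq hsum hker
  set κ := ‖k‖ with hκd
  have hκ1 : (1:ℝ) ≤ κ := hk
  clear_value κ
  have hκ0 : (0:ℝ) < κ := lt_of_lt_of_le one_pos hκ1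
  have hcne : ((κ:ℂ)) ≠ 0 := by
    simpa using ne_of_gt hκ0
  have heqE : lam • mvL N φ
      = Complex.I • mvL (symbolR N1 N2 N3 k) φ - mvL I0 φ := by
    have h1 : lam • mvL N φ = mvL (Complex.I • symbolR N1 N2 N3 k - I0) φ := by
      have := congrArg (WithLp.toLp 2) heq; exact this
    rw [h1, mvL_sub, mvL_smul]
    simp only [ContinuousLinearMap.sub_apply, ContinuousLinearMap.smul_apply]
  have hkerE : mvL I0 ψ = 0 := by
    have := congrArg (WithLp.toLp 2) hker; exact this
  have hI0φ : mvL I0 φ = mvL I0 η := by rw [hsum, map_add, hkerE, zero_add]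
  set nh : EuclideanSpace ℝ (Fin 3) := κ⁻¹ • k with hnhd
  have hnh1 : ‖nh‖ = 1 := by
    rw [hnhd, norm_smul, Real.norm_eq_abs, abs_of_pos (inv_pos.mpr hκ0), ← hκd,
      inv_mul_cancel₀ (ne_of_gt hκ0)]
  have hsymb : symbolR N1 N2 N3 nh = ((κ⁻¹ : ℝ) : ℂ) • symbolR N1 N2 N3 k := by
    have h0 : nh 0 = κ⁻¹ * k 0 := rfl
    have h1 : nh 1 = κ⁻¹ * k 1 := rfl
    have h2 : nh 2 = κ⁻¹ * k 2 := rfl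
    rw [symbolR, symbolR, h0, h1, h2]
    push_cast
    module
  clear_value nh
  set μ : ℂ := -(lam * ((κ:ℂ))⁻¹) with hμd
  clear_value μ
  set M := μ • N + Complex.I • symbolR N1 N2 N3 nh with hMd
  clear_value M
  have hexpM : ∀ v : EuclideanSpace ℂ (Fin n),
      mvL M v = μ • mvL N v
        + (Complex.I * ((κ:ℂ))⁻¹) • mvL (symbolR N1 N2 N3 k) v := by
    intro v
    rw [hMd, mvL_add, mvL_smul, hsymb, mvL_smul, mvL_smul]
    simp only [ContinuousLinearMap.add_apply, ContinuousLinearMap.smul_apply, smul_smul]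
    rw [Complex.ofReal_inv]
  have hMφ : mvL M φ = ((κ:ℂ))⁻¹ • mvL I0 η := by
    have h2 : (κ:ℂ) • mvL M φ = mvL I0 η := by
      rw [hexpM, smul_add, smul_smul, smul_smul]
      have e1 : (κ:ℂ) * μ = -lam := by
        rw [hμd]; field_simp
      have e2 : (κ:ℂ) * (Complex.I * ((κ:ℂ))⁻¹) = Complex.I := by
        field_simp
      rw [e1, e2]
      have e3 : Complex.I • mvL (symbolR N1 N2 N3 k) φ = lam • mvL N φ + mvL I0 φ := by
        rw [heqE]; abel
      rw [e3, hI0φ]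
      module
    calc mvL M φ = ((κ:ℂ))⁻¹ • ((κ:ℂ) • mvL M φ) := by rw [inv_smul_smul₀ hcne]
      _ = ((κ:ℂ))⁻¹ • mvL I0 η := by rw [h2]
  have hMψ : mvL M ψ = ((κ:ℂ))⁻¹ • mvL I0 η - mvL M η := by
    refine eq_sub_of_add_eq ?_
    rw [← hMφ, hsum, map_add]
  -- bound on lam and μ
  have hφn : (0:ℝ) < ‖φ‖ := norm_pos_iff.mpr hφ0
  have hq : a * ‖φ‖^2 ≤ (inner ℂ φ (mvL N φ) : ℂ).re := by
    rw [inner_eq]; exact hlow φ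
  have hqabs : a * ‖φ‖^2 ≤ ‖(inner ℂ φ (mvL N φ) : ℂ)‖ :=
    le_trans hq (re_le_norm _)
  have hSkφ : ‖mvL (symbolR N1 N2 N3 k) φ‖ ≤ B * κ * ‖φ‖ := by rw [hκd]; exact hBle k φ
  have hlamq : ‖lam‖ * (a * ‖φ‖^2) ≤ (B * κ + cI) * ‖φ‖^2 := by
    have h1 : ‖lam‖ * ‖(inner ℂ φ (mvL N φ) : ℂ)‖
        = ‖(inner ℂ φ (lam • mvL N φ) : ℂ)‖ := by
      rw [inner_smul_right, norm_mul]
    have h3 : ‖(inner ℂ φ (lam • mvL N φ) : ℂ)‖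
        ≤ ‖φ‖ * ‖Complex.I • mvL (symbolR N1 N2 N3 k) φ - mvL I0 φ‖ := by
      rw [heqE]; exact norm_inner_le_norm _ _
    have h4 : ‖Complex.I • mvL (symbolR N1 N2 N3 k) φ - mvL I0 φ‖
        ≤ ‖mvL (symbolR N1 N2 N3 k) φ‖ + ‖mvL I0 φ‖ := by
      refine le_trans (norm_sub_le _ _) ?_
      rw [norm_smul, Complex.norm_I, one_mul]
    have h5 : ‖mvL I0 φ‖ ≤ cI * ‖φ‖ := hcIle φ
    calc ‖lam‖ * (a * ‖φ‖^2) ≤ ‖lam‖ * ‖(inner ℂ φ (mvL N φ) : ℂ)‖ :=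
          mul_le_mul_of_nonneg_left hqabs (norm_nonneg lam)
      _ = ‖(inner ℂ φ (lam • mvL N φ) : ℂ)‖ := h1
      _ ≤ ‖φ‖ * ‖Complex.I • mvL (symbolR N1 N2 N3 k) φ - mvL I0 φ‖ := h3
      _ ≤ ‖φ‖ * (‖mvL (symbolR N1 N2 N3 k) φ‖ + ‖mvL I0 φ‖) :=
          mul_le_mul_of_nonneg_left h4 (norm_nonneg φ)
      _ ≤ ‖φ‖ * (B * κ * ‖φ‖ + cI * ‖φ‖) := by
          refine mul_le_mul_of_nonneg_left (add_le_add hSkφ h5) (norm_nonneg φ)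
      _ = (B * κ + cI) * ‖φ‖^2 := by ring
  have hlam : ‖lam‖ * a ≤ B * κ + cI := by
    have hφ2 : (0:ℝ) < ‖φ‖^2 := by positivity
    nlinarith only [hlamq, hφ2]
  have hμκ : ‖μ‖ * κ = ‖lam‖ := by
    rw [hμd, norm_neg, norm_mul, norm_inv]
    have : ‖((κ:ℂ))‖ = κ := by
      rw [Complex.norm_real, Real.norm_eq_abs, abs_of_pos hκ0]
    rw [this]
    field_simp
  have hμR : ‖μ‖ ≤ R := by
    rw [hRd, le_div_iff₀ ha]
    nlinarith only [hlam, hμκ, hκ1, hcI0, hB0, ha, norm_nonneg μ, norm_nonneg lam, hκ0]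
  -- key lemma application
  have hkψ : δ * ‖ψ‖ ≤ ‖mvL M ψ‖ := by rw [hMd]; exact hkey μ hμR nh hnh1 ψ hker
  have hη0 : (0:ℝ) ≤ ‖η‖ := norm_nonneg η
  have hSkη : ‖mvL (symbolR N1 N2 N3 k) η‖ ≤ B * κ * ‖η‖ := by rw [hκd]; exact hBle k η
  have hMη : ‖mvL M η‖ ≤ (R * nN + B) * ‖η‖ := by
    rw [hexpM]
    refine le_trans (norm_add_le _ _) ?_
    have t1 : ‖μ • mvL N η‖ ≤ R * (nN * ‖η‖) := by
      rw [norm_smul]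
      exact mul_le_mul hμR (hnNle η) (norm_nonneg _) hR0
    have t2 : ‖(Complex.I * ((κ:ℂ))⁻¹) • mvL (symbolR N1 N2 N3 k) η‖ ≤ B * ‖η‖ := by
      rw [norm_smul, norm_mul, Complex.norm_I, one_mul, norm_inv]
      have hκn : ‖((κ:ℂ))‖ = κ := by
        rw [Complex.norm_real, Real.norm_eq_abs, abs_of_pos hκ0]
      rw [hκn]
      have h6 : κ⁻¹ * ‖mvL (symbolR N1 N2 N3 k) η‖ ≤ κ⁻¹ * (B * κ * ‖η‖) :=
        mul_le_mul_of_nonneg_left hSkη (le_of_lt (inv_pos.mpr hκ0))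
      calc κ⁻¹ * ‖mvL (symbolR N1 N2 N3 k) η‖ ≤ κ⁻¹ * (B * κ * ‖η‖) := h6
        _ = B * ‖η‖ := by field_simp
    linarith only [t1, t2]
  have hI0η : ‖mvL I0 η‖ ≤ cI * ‖η‖ := hcIle η
  have hMψn : ‖mvL M ψ‖ ≤ C * ‖η‖ := by
    rw [hMψ]
    refine le_trans (norm_sub_le _ _) ?_
    have t1 : ‖((κ:ℂ))⁻¹ • mvL I0 η‖ ≤ cI * ‖η‖ := by
      rw [norm_smul, norm_inv]
      have hκn : ‖((κ:ℂ))‖ = κ := by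
        rw [Complex.norm_real, Real.norm_eq_abs, abs_of_pos hκ0]
      rw [hκn]
      have hκi : κ⁻¹ ≤ 1 := by
        rw [inv_le_one_iff₀]; right; exact hκ1
      nlinarith only [hκi, hI0η, norm_nonneg (mvL I0 η), inv_pos.mpr hκ0, hη0, hcI0]
    rw [hCd]
    linarith only [t1, hMη, hη0]
  have hψle : δ * ‖ψ‖ ≤ C * ‖η‖ := le_trans hkψ hMψn
  have hψle2 : ‖ψ‖ ≤ (C / δ) * ‖η‖ := by
    rw [div_mul_eq_mul_div, le_div_iff₀ hδ, mul_comm]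
    exact hψle
  have hup : (inner ℂ ψ (mvL N ψ) : ℂ).re ≤ nN * ‖ψ‖^2 := by
    refine le_trans (re_le_norm _) ?_
    calc ‖(inner ℂ ψ (mvL N ψ) : ℂ)‖ ≤ ‖ψ‖ * ‖mvL N ψ‖ := norm_inner_le_norm _ _
      _ ≤ ‖ψ‖ * (nN * ‖ψ‖) :=
          mul_le_mul_of_nonneg_left (hnNle ψ) (norm_nonneg ψ)
      _ = nN * ‖ψ‖^2 := by ring
  have hup' : (star ψ ⬝ᵥ (N *ᵥ ψ)).re ≤ nN * ‖ψ‖^2 := by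
    rw [inner_eq] at hup; exact hup
  have hlowη : a * ‖η‖^2 ≤ (star η ⬝ᵥ (N *ᵥ η)).re := hlow η
  have hψ2 : ‖ψ‖^2 ≤ (C / δ)^2 * ‖η‖^2 := by
    nlinarith only [hψle2, norm_nonneg ψ, norm_nonneg η,
      div_nonneg (le_of_lt hC0) (le_of_lt hδ)]
  have hca : ((nN + 1) * (C / δ)^2 / a) * a = (nN + 1) * (C / δ)^2 :=
    div_mul_cancel₀ _ (ne_of_gt ha)
  have hc'0 : (0:ℝ) ≤ (nN + 1) * (C / δ)^2 / a := by positivity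
  nlinarith only [hup', hψ2, hlowη, mul_le_mul_of_nonneg_left hlowη hc'0, hca,
    mul_le_mul_of_nonneg_left hψ2 hnN0, sq_nonneg (C / δ), hη0, norm_nonneg ψ, ha, hδ,
    hnN0, hC0, hη0]

end IEVPaux

/-- Inequality (ievp): under Condition (3), the momentary-equilibrium part `ψ`
(orthogonal projection onto `ker I₀`) of any eigenvector `φ` of the symbol at a
frequency `|k| ≥ 1` is uniformly controlled by its non-equilibrium part `η`. -/
theorem equilibrium_part_controlled
    (n : ℕ) (hn : 1 ≤ n)
    (N N1 N2 N3 I0 : Matrix (Fin n) (Fin n) ℂ)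
    (hN : N.PosDef)
    (hN1 : N1.IsHermitian) (hN2 : N2.IsHermitian) (hN3 : N3.IsHermitian)
    (hI0 : I0.PosSemidef)
    (hcond3 : ∀ (μ : ℂ) (nh : EuclideanSpace ℝ (Fin 3)), ‖nh‖ = 1 →
      ∀ ψ : Fin n → ℂ, I0 *ᵥ ψ = 0 →
        (μ • N + Complex.I • symbolR N1 N2 N3 nh) *ᵥ ψ = 0 → ψ = 0) :
    ∃ c' > (0 : ℝ), ∀ (k : EuclideanSpace ℝ (Fin 3)), 1 ≤ ‖k‖ →
      ∀ (lam : ℂ) (φ ψ η : Fin n → ℂ), φ ≠ 0 →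
      lam • (N *ᵥ φ) = (Complex.I • symbolR N1 N2 N3 k - I0) *ᵥ φ →
      φ = ψ + η →
      I0 *ᵥ ψ = 0 →
      (∀ χ : Fin n → ℂ, I0 *ᵥ χ = 0 → star χ ⬝ᵥ η = 0) →
      (star ψ ⬝ᵥ (N *ᵥ ψ)).re ≤ c' * (star η ⬝ᵥ (N *ᵥ η)).re := by

  obtain ⟨c', hc', H⟩ := IEVPaux.main_aux n hn N N1 N2 N3 I0 hN hcond3
  exact ⟨c', hc', fun k hk lam φ ψ η h1 h2 h3 h4 _ =>
    H k hk lam (WithLp.toLp 2 φ) (WithLp.toLp 2 ψ) (WithLp.toLp 2 η) (by simpa using h1) h2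
      (by rw [h3]; rfl) h4⟩
end
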